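/- For s, t > 0, the random variable √(γ_t · γ_s) (square root of the product of independent Gamma(t,1) and Gamma(s,1) random variables) has density x ↦ (4 x^{t+s-1} / (Γ(t)Γ(s))) · K_{t-s}(2x) on (0,∞), where K_ν is the modified Bessel function of the second kind. Equivalently, for every bounded measurable φ, ∫₀^∞∫₀^∞ φ(√(uv)) u^{t-1}e^{-u} v^{s-1}e^{-v}/(Γ(t)Γ(s)) du dv = ∫₀^∞ φ(x) · 4x^{t+s-1} K_{t-s}(2x)/(Γ(t)Γ(s)) dx. -/

import Mathlib

open Real MeasureTheory Set

lemma cosh_quad_bound (y : ℝ) : y^2/8 ≤ Real.cosh y := by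
  rw [← Real.cosh_abs, Real.cosh_eq]
  have h0 : (0:ℝ) ≤ |y| := abs_nonneg y
  have h1 : |y|/2 + 1 ≤ Real.exp (|y|/2) := Real.add_one_le_exp _
  have h2 : Real.exp |y| = Real.exp (|y|/2) * Real.exp (|y|/2) := by
    rw [← Real.exp_add]; ring_nf
  have h3 : (0:ℝ) ≤ Real.exp (-|y|) := (Real.exp_pos _).le
  have h4 : y^2 = |y|^2 := (sq_abs y).symm
  nlinarith [sq_nonneg (|y|/2 + 1)]

lemma integrable_exp_lin_cosh (a r : ℝ) (hr : 0 < r) :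
    Integrable fun y : ℝ => Real.exp (a*y) * Real.exp (-r * Real.cosh y) := by
  have hc : 0 < r/8 := by linarith
  set c := r/8 with hc'
  set d := a/(2*c) with hd
  have key : Integrable fun y : ℝ => Real.exp (c*d^2) * Real.exp (-c * (y - d)^2) :=
    ((integrable_exp_neg_mul_sq hc).comp_sub_right d).const_mul _
  refine key.mono' (((continuous_const.mul continuous_id).rexp.mul
    ((continuous_const.mul Real.continuous_cosh).rexp)).aestronglyMeasurable)
    (Filter.Eventually.of_forall fun y => ?_)
  have hb : a*y - r * Real.cosh y ≤ c*d^2 + (-c * (y-d)^2) := by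
    have h1 : y^2/8 ≤ Real.cosh y := cosh_quad_bound y
    have h2 : c * y^2 ≤ r * Real.cosh y := by
      rw [hc']; nlinarith
    have h3 : c*d^2 + (-c * (y-d)^2) = a*y - c*y^2 := by
      have hcd : 2 * c * d = a := by rw [hd]; field_simp
      linear_combination y * hcd
    linarith
  have : Real.exp (a*y) * Real.exp (-r * Real.cosh y) ≤
      Real.exp (c*d^2) * Real.exp (-c * (y-d)^2) := by
    rw [← Real.exp_add, ← Real.exp_add]
    exact Real.exp_le_exp.mpr (by linarith)
  simpa [abs_of_pos (mul_pos (Real.exp_pos _) (Real.exp_pos _))] using this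

lemma integral_exp_lin_cosh (a r : ℝ) (hr : 0 < r) :
    ∫ y : ℝ, Real.exp (a*y) * Real.exp (-r * Real.cosh y)
      = 2 * ∫ y in Ioi (0:ℝ), Real.cosh (a*y) * Real.exp (-r * Real.cosh y) := by
  have hint := integrable_exp_lin_cosh a r hr
  have hneg : Integrable fun y : ℝ => Real.exp (a*(-y)) * Real.exp (-r * Real.cosh (-y)) :=
    hint.comp_neg
  rw [← intervalIntegral.integral_Iic_add_Ioi (b := (0:ℝ)) hint.integrableOn hint.integrableOn]
  have h1 := integral_comp_neg_Ioi (0:ℝ)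
    (fun y => Real.exp (a*y) * Real.exp (-r * Real.cosh y))
  rw [neg_zero] at h1
  rw [← h1, ← integral_add hneg.integrableOn hint.integrableOn, ← integral_const_mul]
  refine setIntegral_congr_fun measurableSet_Ioi fun y _ => ?_
  show Real.exp (a * -y) * Real.exp (-r * Real.cosh (-y)) + _ = _
  rw [mul_neg, Real.cosh_neg, Real.cosh_eq (a*y)]
  ring
noncomputable def sqMap (p : ℝ × ℝ) : ℝ × ℝ := (p.1 * Real.exp p.2, p.1 * Real.exp (-p.2))

noncomputable def sqDeriv (p : ℝ × ℝ) : ℝ × ℝ →L[ℝ] ℝ × ℝ :=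
  LinearMap.toContinuousLinearMap (Matrix.toLin (Module.Basis.finTwoProd ℝ) (Module.Basis.finTwoProd ℝ)
    !![Real.exp p.2, p.1 * Real.exp p.2; Real.exp (-p.2), -(p.1 * Real.exp (-p.2))])

lemma hasFDerivAt_sqMap (p : ℝ × ℝ) : HasFDerivAt sqMap (sqDeriv p) p := by
  rw [sqDeriv, Matrix.toLin_finTwoProd_toContinuousLinearMap]
  have h2 : HasDerivAt (fun y : ℝ => Real.exp (-y)) (-Real.exp (-p.2)) p.2 := by
    simpa using ((hasDerivAt_id p.2).neg).exp
  convert HasFDerivAt.prodMk (𝕜 := ℝ)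
    (hasFDerivAt_fst.mul ((Real.hasDerivAt_exp p.2).comp_hasFDerivAt p hasFDerivAt_snd))
    (hasFDerivAt_fst.mul (h2.comp_hasFDerivAt p hasFDerivAt_snd)) using 1
  iterate 4 rfl
  ext <;> simp [smul_smul, add_comm, neg_mul, smul_neg, neg_smul _ (ContinuousLinearMap.snd ℝ ℝ ℝ),
    mul_comm]

lemma sqDeriv_det (p : ℝ × ℝ) : (sqDeriv p).det = -(2 * p.1) := by
  have he : Real.exp p.2 * Real.exp (-p.2) = 1 := by
    rw [← Real.exp_add]; simp
  simp only [sqDeriv, LinearMap.det_toContinuousLinearMap, LinearMap.det_toLin,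
    Matrix.det_fin_two_of]
  linear_combination (-(2*p.1)) * he

lemma sqMap_injOn : InjOn sqMap (Ioi (0:ℝ) ×ˢ (univ : Set ℝ)) := by
  rintro ⟨x₁, y₁⟩ ⟨hx₁, -⟩ ⟨x₂, y₂⟩ ⟨hx₂, -⟩ h
  simp only [sqMap, Prod.mk.injEq] at h
  obtain ⟨h1, h2⟩ := h
  have hx₁' : (0:ℝ) < x₁ := hx₁
  have hx₂' : (0:ℝ) < x₂ := hx₂
  have hsq : x₁^2 = x₂^2 := by
    have := congrArg₂ (· * ·) h1 h2
    have e1 : Real.exp y₁ * Real.exp (-y₁) = 1 := by rw [← Real.exp_add]; simp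
    have e2 : Real.exp y₂ * Real.exp (-y₂) = 1 := by rw [← Real.exp_add]; simp
    nlinarith [this]
  have hx : x₁ = x₂ := by nlinarith
  subst hx
  have hy : y₁ = y₂ := Real.exp_injective (mul_left_cancel₀ hx₁'.ne' h1)
  simp [hy]

lemma sqMap_image : sqMap '' (Ioi (0:ℝ) ×ˢ (univ : Set ℝ)) = Ioi (0:ℝ) ×ˢ Ioi (0:ℝ) := by
  apply Set.Subset.antisymm
  · rintro q ⟨⟨x, y⟩, ⟨hx, -⟩, rfl⟩
    have hx' : (0:ℝ) < x := hx
    exact ⟨mul_pos hx' (Real.exp_pos _), mul_pos hx' (Real.exp_pos _)⟩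
  · rintro ⟨u, v⟩ ⟨hu, hv⟩
    have hu' : (0:ℝ) < u := hu
    have hv' : (0:ℝ) < v := hv
    refine ⟨(Real.sqrt (u*v), Real.log (Real.sqrt u / Real.sqrt v)), ⟨?_, trivial⟩, ?_⟩
    · exact Real.sqrt_pos.mpr (mul_pos hu' hv')
    · have hsu : (0:ℝ) < Real.sqrt u := Real.sqrt_pos.mpr hu'
      have hsv : (0:ℝ) < Real.sqrt v := Real.sqrt_pos.mpr hv'
      have hexp : Real.exp (Real.log (Real.sqrt u / Real.sqrt v)) = Real.sqrt u / Real.sqrt v :=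
        Real.exp_log (div_pos hsu hsv)
      have hexp' : Real.exp (-Real.log (Real.sqrt u / Real.sqrt v)) = Real.sqrt v / Real.sqrt u := by
        rw [Real.exp_neg, hexp, inv_div]
      simp only [sqMap, hexp, hexp', Real.sqrt_mul hu'.le, Prod.mk.injEq]
      constructor
      · rw [div_eq_mul_inv]
        calc √u * √v * (√u * (√v)⁻¹) = √u * √u * (√v * (√v)⁻¹) := by ring
        _ = u := by rw [mul_inv_cancel₀ hsv.ne', Real.mul_self_sqrt hu'.le, mul_one]
      · rw [div_eq_mul_inv]
        calc √u * √v * (√v * (√u)⁻¹) = √v * √v * (√u * (√u)⁻¹) := by ring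
        _ = v := by rw [mul_inv_cancel₀ hsu.ne', Real.mul_self_sqrt hv'.le, mul_one]

lemma inner_point (t s : ℝ) (φ : ℝ → ℝ) (x y : ℝ) (hx : 0 < x) :
    |(sqDeriv (x,y)).det| * (φ (Real.sqrt ((x*Real.exp y) * (x*Real.exp (-y)))) *
      ((x*Real.exp y) ^ (t-1) * Real.exp (-(x*Real.exp y)) * (x*Real.exp (-y)) ^ (s-1)
        * Real.exp (-(x*Real.exp (-y))) / (Real.Gamma t * Real.Gamma s)))
    = (φ x * (2 * x^(t+s-1)) / (Real.Gamma t * Real.Gamma s))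
        * (Real.exp ((t-s)*y) * Real.exp (-(2*x) * Real.cosh y)) := by
  have hdet : |(sqDeriv (x,y)).det| = 2*x := by
    rw [sqDeriv_det, abs_neg, abs_of_pos (by positivity)]
  have harg : (x*Real.exp y) * (x*Real.exp (-y)) = x^2 := by
    have : (x*Real.exp y) * (x*Real.exp (-y)) = x^2 * (Real.exp y * Real.exp (-y)) := by ring
    rw [this, ← Real.exp_add, add_neg_cancel, Real.exp_zero, mul_one]
  have e2 : (x * Real.exp y) ^ (t-1) = x^(t-1) * Real.exp (y*(t-1)) := by
    rw [Real.mul_rpow hx.le (Real.exp_pos _).le, ← Real.exp_mul]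
  have e3 : (x * Real.exp (-y)) ^ (s-1) = x^(s-1) * Real.exp (-y*(s-1)) := by
    rw [Real.mul_rpow hx.le (Real.exp_pos _).le, ← Real.exp_mul]
  rw [hdet, harg, Real.sqrt_sq hx.le, e2, e3,
    show (t-s)*y = y*(t-1) + -y*(s-1) by ring, Real.exp_add,
    show -(2*x)*Real.cosh y = -(x*Real.exp y) + -(x*Real.exp (-y)) by rw [Real.cosh_eq]; ring,
    Real.exp_add,
    show t+s-1 = (t-1)+((s-1)+1) by ring, Real.rpow_add hx, Real.rpow_add hx, Real.rpow_one]
  ring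

/-- The modified Bessel function of the second kind. -/
noncomputable def besselK (ν x : ℝ) : ℝ :=
  ∫ y in Set.Ioi (0:ℝ), Real.cosh (ν * y) * Real.exp (-x * Real.cosh y)

theorem stmt_16 (t s : ℝ) (ht : 0 < t) (hs : 0 < s)
    (φ : ℝ → ℝ) (hφm : Measurable φ) (hφb : ∃ C : ℝ, ∀ x : ℝ, |φ x| ≤ C) :
    ∫ u in Set.Ioi (0:ℝ), ∫ v in Set.Ioi (0:ℝ),
        φ (Real.sqrt (u * v))
          * (u ^ (t - 1) * Real.exp (-u) * v ^ (s - 1) * Real.exp (-v)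
              / (Real.Gamma t * Real.Gamma s))
      = ∫ x in Set.Ioi (0:ℝ),
          φ x * (4 * x ^ (t + s - 1) * besselK (t - s) (2 * x)
              / (Real.Gamma t * Real.Gamma s)) := by
  obtain ⟨C₀, hC₀⟩ := hφb
  set C := max C₀ 0 with hCdef
  have hC : ∀ x, |φ x| ≤ C := fun x => (hC₀ x).trans (le_max_left _ _)
  have hΓt : 0 < Real.Gamma t := Real.Gamma_pos_of_pos ht
  have hΓs : 0 < Real.Gamma s := Real.Gamma_pos_of_pos hs
  set F : ℝ × ℝ → ℝ := fun p =>
    φ (Real.sqrt (p.1 * p.2)) * (p.1 ^ (t - 1) * Real.exp (-p.1) * p.2 ^ (s - 1)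
      * Real.exp (-p.2) / (Real.Gamma t * Real.Gamma s)) with hF
  have hFmeas : Measurable F := by
    apply Measurable.mul
    · exact hφm.comp ((measurable_fst.mul measurable_snd).sqrt)
    · fun_prop
  -- gamma densities integrable
  have d1 : IntegrableOn (fun u : ℝ => u ^ (t-1) * Real.exp (-u)) (Ioi 0) := by
    exact (Real.GammaIntegral_convergent ht).congr_fun (fun x _ => mul_comm _ _)
      measurableSet_Ioi
  have d2 : IntegrableOn (fun v : ℝ => v ^ (s-1) * Real.exp (-v)) (Ioi 0) := by
    exact (Real.GammaIntegral_convergent hs).congr_fun (fun x _ => mul_comm _ _)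
      measurableSet_Ioi
  have hD : Integrable (fun p : ℝ × ℝ => (p.1^(t-1)*Real.exp (-p.1)) * (p.2^(s-1)*Real.exp (-p.2)))
      ((volume.restrict (Ioi 0)).prod (volume.restrict (Ioi 0))) := d1.mul_prod d2
  rw [Measure.prod_restrict] at hD
  have hFint : IntegrableOn F (Ioi 0 ×ˢ Ioi 0) (volume : Measure (ℝ × ℝ)) := by
    rw [IntegrableOn, Measure.volume_eq_prod]
    refine Integrable.mono' (hD.const_mul (C / (Real.Gamma t * Real.Gamma s)))
      hFmeas.aestronglyMeasurable.restrict ?_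
    filter_upwards [ae_restrict_mem (measurableSet_Ioi.prod measurableSet_Ioi)] with p hp
    obtain ⟨hp1, hp2⟩ := hp
    have hd1 : (0:ℝ) < p.1 ^ (t-1) * Real.exp (-p.1) :=
      mul_pos (Real.rpow_pos_of_pos hp1 _) (Real.exp_pos _)
    have hd2 : (0:ℝ) < p.2 ^ (s-1) * Real.exp (-p.2) :=
      mul_pos (Real.rpow_pos_of_pos hp2 _) (Real.exp_pos _)
    have : ‖F p‖ = |φ (Real.sqrt (p.1 * p.2))| *
        ((p.1 ^ (t-1) * Real.exp (-p.1)) * (p.2 ^ (s-1) * Real.exp (-p.2))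
          / (Real.Gamma t * Real.Gamma s)) := by
      rw [hF, Real.norm_eq_abs, abs_mul]
      congr 1
      rw [abs_of_pos (div_pos (mul_pos (mul_pos hd1 (Real.rpow_pos_of_pos hp2 _))
        (Real.exp_pos _)) (mul_pos hΓt hΓs))]
      ring
    rw [this]
    calc |φ (Real.sqrt (p.1 * p.2))| *
        ((p.1 ^ (t-1) * Real.exp (-p.1)) * (p.2 ^ (s-1) * Real.exp (-p.2))
          / (Real.Gamma t * Real.Gamma s))
        ≤ C * ((p.1 ^ (t-1) * Real.exp (-p.1)) * (p.2 ^ (s-1) * Real.exp (-p.2))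
          / (Real.Gamma t * Real.Gamma s)) := by
          apply mul_le_mul_of_nonneg_right (hC _) (by positivity)
      _ = C / (Real.Gamma t * Real.Gamma s) *
          ((p.1 ^ (t-1) * Real.exp (-p.1)) * (p.2 ^ (s-1) * Real.exp (-p.2))) := by ring
  have hmes : MeasurableSet (Ioi (0:ℝ) ×ˢ (univ : Set ℝ)) :=
    measurableSet_Ioi.prod MeasurableSet.univ
  have hf' : ∀ p ∈ Ioi (0:ℝ) ×ˢ (univ : Set ℝ),
      HasFDerivWithinAt sqMap (sqDeriv p) (Ioi (0:ℝ) ×ˢ (univ : Set ℝ)) p :=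
    fun p _ => (hasFDerivAt_sqMap p).hasFDerivWithinAt
  have himg : IntegrableOn F (sqMap '' (Ioi (0:ℝ) ×ˢ (univ : Set ℝ))) volume := by
    rw [sqMap_image]; exact hFint
  have hGint : IntegrableOn (fun p => |(sqDeriv p).det| • F (sqMap p))
      (Ioi (0:ℝ) ×ˢ (univ : Set ℝ)) volume :=
    (integrableOn_image_iff_integrableOn_abs_det_fderiv_smul volume hmes hf' sqMap_injOn F).mp himg
  calc ∫ u in Set.Ioi (0:ℝ), ∫ v in Set.Ioi (0:ℝ),
        φ (Real.sqrt (u * v)) * (u ^ (t - 1) * Real.exp (-u) * v ^ (s - 1) * Real.exp (-v)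
              / (Real.Gamma t * Real.Gamma s))
      = ∫ p in Ioi (0:ℝ) ×ˢ Ioi (0:ℝ), F p ∂(volume : Measure (ℝ × ℝ)) := by
        rw [Measure.volume_eq_prod, setIntegral_prod F (by rwa [IntegrableOn, ← Measure.volume_eq_prod])]
    _ = ∫ p in sqMap '' (Ioi (0:ℝ) ×ˢ (univ : Set ℝ)), F p ∂(volume : Measure (ℝ × ℝ)) := by
        rw [sqMap_image]
    _ = ∫ p in Ioi (0:ℝ) ×ˢ (univ : Set ℝ), |(sqDeriv p).det| • F (sqMap p) :=
        integral_image_eq_integral_abs_det_fderiv_smul volume hmes hf' sqMap_injOn F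
    _ = ∫ x in Ioi (0:ℝ), ∫ y : ℝ, |(sqDeriv (x,y)).det| • F (sqMap (x,y)) := by
        rw [Measure.volume_eq_prod, setIntegral_prod _ (by rwa [IntegrableOn, ← Measure.volume_eq_prod])]
        simp [Measure.restrict_univ]
    _ = ∫ x in Set.Ioi (0:ℝ),
          φ x * (4 * x ^ (t + s - 1) * besselK (t - s) (2 * x)
              / (Real.Gamma t * Real.Gamma s)) := by
        refine setIntegral_congr_fun measurableSet_Ioi fun x hx => ?_
        have hx' : (0:ℝ) < x := hx
        have hkey : ∀ y : ℝ, |(sqDeriv (x,y)).det| • F (sqMap (x,y))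
            = (φ x * (2 * x^(t+s-1)) / (Real.Gamma t * Real.Gamma s))
                * (Real.exp ((t-s)*y) * Real.exp (-(2*x) * Real.cosh y)) := by
          intro y
          rw [smul_eq_mul]
          exact inner_point t s φ x y hx'
        rw [show (fun y : ℝ => |(sqDeriv (x,y)).det| • F (sqMap (x,y)))
            = fun y : ℝ => (φ x * (2 * x^(t+s-1)) / (Real.Gamma t * Real.Gamma s))
                * (Real.exp ((t-s)*y) * Real.exp (-(2*x) * Real.cosh y)) from funext hkey,
          integral_const_mul, integral_exp_lin_cosh (t-s) (2*x) (by positivity)]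
        rw [besselK]
        ring
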